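/- For real v with 0 < v < 1 and reals μ > 0, β > 0: ∫₀^∞ x^{v-1} e^{-μx}/(x+β) dx = β^{v-1} e^{βμ} Γ(v) Γ(1-v, βμ), where Γ(·,·) is the upper incomplete gamma function. -/

import Mathlib

open Real MeasureTheory

/-- The upper incomplete gamma function `Γ(a, z) = ∫_z^∞ t^(a-1) e^(-t) dt`. -/
noncomputable def upperIncompleteGamma (a z : ℝ) : ℝ :=
  ∫ t in Set.Ioi z, t ^ (a - 1) * Real.exp (-t)

open Set

private lemma integral_comp_add_right_Ioi (g : ℝ → ℝ) (a c : ℝ) :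
    (∫ x in Ioi a, g (x + c)) = ∫ x in Ioi (a + c), g x := by
  rw [← integral_indicator measurableSet_Ioi, ← integral_indicator measurableSet_Ioi,
    ← integral_add_right_eq_self ((Ioi (a + c)).indicator g) c]
  congr 1
  ext x
  by_cases hx : x ∈ Ioi a
  · rw [Set.indicator_of_mem hx, Set.indicator_of_mem]
    simp only [mem_Ioi] at hx ⊢
    linarith
  · rw [Set.indicator_of_notMem hx, Set.indicator_of_notMem]
    simp only [mem_Ioi] at hx ⊢
    linarith

private lemma integral_exp_neg_mul_Ioi_zero {c : ℝ} (hc : 0 < c) :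
    (∫ t in Ioi (0 : ℝ), Real.exp (-(c * t))) = c⁻¹ := by
  have := integral_comp_mul_left_Ioi (fun s => Real.exp (-s)) 0 hc
  simpa only [mul_zero, integral_exp_neg_Ioi_zero, smul_eq_mul, mul_one] using this

theorem integral_rpow_exp_div_add (v μ β : ℝ) (hv0 : 0 < v) (hv1 : v < 1)
    (hμ : 0 < μ) (hβ : 0 < β) :
    ∫ x in Set.Ioi (0 : ℝ), x ^ (v - 1) * Real.exp (-(μ * x)) / (x + β)
      = β ^ (v - 1) * Real.exp (β * μ) * Real.Gamma v * upperIncompleteGamma (1 - v) (β * μ) := by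
  set ν : Measure ℝ := volume.restrict (Ioi (0 : ℝ)) with hν
  set f : ℝ → ℝ → ℝ := fun x t => x ^ (v - 1) * Real.exp (-(μ * x)) * Real.exp (-((x + β) * t))
    with hf
  -- slice formula in t
  have hslice : ∀ x : ℝ, 0 < x →
      (∫ t, f x t ∂ν) = x ^ (v - 1) * Real.exp (-(μ * x)) / (x + β) := by
    intro x hx
    have hxβ : 0 < x + β := by linarith
    rw [hν, hf]
    simp only
    rw [MeasureTheory.integral_const_mul, integral_exp_neg_mul_Ioi_zero hxβ, div_eq_mul_inv]
  -- measurability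
  have hmeas : AEStronglyMeasurable (Function.uncurry f) (ν.prod ν) := by
    apply Measurable.aestronglyMeasurable
    rw [hf]
    fun_prop
  -- integrability of the LHS integrand
  have hgint : IntegrableOn (fun x : ℝ => x ^ (v - 1) * Real.exp (-(μ * x))) (Ioi 0) := by
    have := integrableOn_rpow_mul_exp_neg_mul_rpow (p := 1) (s := v - 1) (b := μ)
      (by linarith) zero_lt_one hμ
    refine this.congr_fun (fun x hx => ?_) measurableSet_Ioi
    simp only [Real.rpow_one, neg_mul]
  have hLint : IntegrableOn (fun x : ℝ => x ^ (v - 1) * Real.exp (-(μ * x)) / (x + β))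
      (Ioi 0) := by
    refine Integrable.mono' (hgint.const_mul β⁻¹) ?_ ?_
    · apply Measurable.aestronglyMeasurable
      fun_prop
    · filter_upwards [self_mem_ae_restrict (measurableSet_Ioi : MeasurableSet (Ioi (0:ℝ)))]
        with x hx
      have hx0 : (0:ℝ) < x := hx
      have hxβ : 0 < x + β := by linarith
      have hnn : 0 ≤ x ^ (v - 1) * Real.exp (-(μ * x)) / (x + β) := by positivity
      rw [Real.norm_eq_abs, abs_of_nonneg hnn]
      have hA : 0 ≤ x ^ (v - 1) * Real.exp (-(μ * x)) := by positivity
      calc x ^ (v - 1) * Real.exp (-(μ * x)) / (x + β)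
          ≤ x ^ (v - 1) * Real.exp (-(μ * x)) / β := by
            rw [div_le_div_iff₀ (by linarith) hβ]
            nlinarith [hA, hx0.le]
        _ = β⁻¹ * (x ^ (v - 1) * Real.exp (-(μ * x))) := by ring
  -- product integrability
  have hprod : Integrable (Function.uncurry f) (ν.prod ν) := by
    rw [MeasureTheory.integrable_prod_iff hmeas]
    constructor
    · filter_upwards [self_mem_ae_restrict (measurableSet_Ioi : MeasurableSet (Ioi (0:ℝ)))]
        with x hx
      have hxβ : 0 < x + β := by have : (0:ℝ) < x := hx; linarith
      have : IntegrableOn (fun t : ℝ => Real.exp (-(x + β) * t)) (Ioi 0) :=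
        exp_neg_integrableOn_Ioi 0 hxβ
      have h2 : IntegrableOn (fun t : ℝ =>
          x ^ (v - 1) * Real.exp (-(μ * x)) * Real.exp (-(x + β) * t)) (Ioi 0) :=
        this.const_mul _
      refine h2.congr_fun (fun t _ => ?_) measurableSet_Ioi
      simp only [hf, neg_mul]
      rfl
    · refine Integrable.mono' hLint ?_ ?_
      · exact (hmeas.norm.integral_prod_right')
      · filter_upwards [self_mem_ae_restrict (measurableSet_Ioi : MeasurableSet (Ioi (0:ℝ)))]
          with x hx
        have hx0 : (0:ℝ) < x := hx
        have heq : (∫ t, ‖f x t‖ ∂ν) = ∫ t, f x t ∂ν := by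
          refine integral_congr_ae ?_
          filter_upwards [self_mem_ae_restrict (measurableSet_Ioi : MeasurableSet (Ioi (0:ℝ)))]
            with t ht
          have : 0 ≤ f x t := by
            have := Real.rpow_nonneg hx0.le (v - 1)
            positivity
          rw [Real.norm_eq_abs, abs_of_nonneg this]
        have hnn : 0 ≤ ∫ t, ‖f x t‖ ∂ν := integral_nonneg fun t => norm_nonneg _
        refine le_of_eq ?_
        calc ‖∫ t, ‖f x t‖ ∂ν‖ = ∫ t, ‖f x t‖ ∂ν := Real.norm_of_nonneg hnn
          _ = x ^ (v - 1) * Real.exp (-(μ * x)) / (x + β) := by rw [heq, hslice x hx0]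
  -- main computation
  have key : (∫ x in Ioi (0:ℝ), x ^ (v - 1) * Real.exp (-(μ * x)) / (x + β))
      = ∫ t, (∫ x, f x t ∂ν) ∂ν := by
    rw [← MeasureTheory.integral_integral_swap hprod]
    refine setIntegral_congr_fun measurableSet_Ioi (fun x hx => ?_)
    exact (hslice x hx).symm
  rw [key]
  -- inner integral in x
  have hinner : ∀ t : ℝ, 0 < t →
      (∫ x, f x t ∂ν) = Real.Gamma v * (Real.exp (-(β * t)) * (μ + t) ^ (-v)) := by
    intro t ht
    have hμt : 0 < μ + t := by linarith
    have h1 : (∫ x, f x t ∂ν)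
        = ∫ x in Ioi (0:ℝ), Real.exp (-(β * t)) * (x ^ (v - 1) * Real.exp (-((μ + t) * x))) := by
      refine setIntegral_congr_fun measurableSet_Ioi (fun x hx => ?_)
      rw [hf]
      simp only
      rw [mul_assoc, ← Real.exp_add, mul_comm (Real.exp (-(β * t))), mul_assoc,
        ← Real.exp_add]
      congr 1
      rw [Real.exp_eq_exp]
      ring
    rw [h1, MeasureTheory.integral_const_mul, integral_rpow_mul_exp_neg_mul_Ioi hv0 hμt]
    rw [one_div, Real.inv_rpow hμt.le, ← Real.rpow_neg hμt.le]
    ring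
  have h2 : (∫ t, (∫ x, f x t ∂ν) ∂ν)
      = Real.Gamma v * ∫ t in Ioi (0:ℝ), Real.exp (-(β * t)) * (μ + t) ^ (-v) := by
    rw [← MeasureTheory.integral_const_mul]
    exact setIntegral_congr_fun measurableSet_Ioi (fun t ht => hinner t ht)
  rw [h2]
  -- substitution for the outer integral
  have h3 : (∫ t in Ioi (0:ℝ), Real.exp (-(β * t)) * (μ + t) ^ (-v))
      = Real.exp (β * μ) * ∫ u in Ioi μ, Real.exp (-(β * u)) * u ^ (-v) := by
    rw [← MeasureTheory.integral_const_mul]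
    have := integral_comp_add_right_Ioi
      (fun u => Real.exp (β * μ) * (Real.exp (-(β * u)) * u ^ (-v))) 0 μ
    rw [zero_add] at this
    rw [← this]
    refine setIntegral_congr_fun measurableSet_Ioi (fun t ht => ?_)
    rw [← mul_assoc, ← Real.exp_add]
    congr 2
    · congr 1; ring
    · ring
  have h4 : (∫ u in Ioi μ, Real.exp (-(β * u)) * u ^ (-v))
      = β ^ (v - 1) * upperIncompleteGamma (1 - v) (β * μ) := by
    have hcomp := integral_comp_mul_left_Ioi
      (fun s => β ^ v * (s ^ ((1 - v) - 1) * Real.exp (-s))) μ hβ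
    have heq : ∀ u ∈ Ioi μ, Real.exp (-(β * u)) * u ^ (-v)
        = β ^ v * ((β * u) ^ ((1 - v) - 1) * Real.exp (-(β * u))) := by
      intro u hu
      have hu0 : 0 < u := lt_trans hμ hu
      have hex : (1 : ℝ) - v - 1 = -v := by ring
      have hβv : β ^ v * β ^ (-v) = 1 := by
        rw [← Real.rpow_add hβ, show v + -v = 0 by ring, Real.rpow_zero]
      rw [hex, Real.mul_rpow hβ.le hu0.le]
      calc Real.exp (-(β * u)) * u ^ (-v)
          = (β ^ v * β ^ (-v)) * (u ^ (-v) * Real.exp (-(β * u))) := by rw [hβv]; ring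
        _ = β ^ v * (β ^ (-v) * u ^ (-v) * Real.exp (-(β * u))) := by ring
    rw [setIntegral_congr_fun measurableSet_Ioi heq, hcomp, smul_eq_mul,
      MeasureTheory.integral_const_mul, upperIncompleteGamma]
    have hb1 : β⁻¹ * β ^ v = β ^ (v - 1) := by
      rw [← Real.rpow_neg_one β, ← Real.rpow_add hβ]
      congr 1
      ring
    rw [← mul_assoc, hb1]
  rw [h3, h4]
  ring
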